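/- Define J(x) = ∑_{p prime, k ≥ 1, p^k ≤ x} 1/k (Riemann's prime-power counting function). Then for all x ≥ 2 and real s > 1, (1/s)·log ζ(s) = ∫_0^∞ J(e^u) e^{-su} du. -/

import Mathlib

/-- Riemann's prime-power counting function `J(x) = ∑_{p^k ≤ x} 1/k`,
written via `Λ(n) / log n = 1/k` for `n = p^k`. -/
noncomputable def riemannJ (x : ℝ) : ℝ :=
  ∑ n ∈ Finset.Icc 1 ⌊x⌋₊, ArithmeticFunction.vonMangoldt n / Real.log n

open Real Set MeasureTheory

noncomputable def zetaHom (s : ℝ) (hs : 1 < s) : ℕ →*₀ ℝ where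
  toFun n := (n : ℝ) ^ (-s)
  map_zero' := by
    simp only [Nat.cast_zero]
    exact Real.zero_rpow (neg_ne_zero.mpr (by linarith : s ≠ 0))
  map_one' := by simp
  map_mul' m n := by push_cast; exact Real.mul_rpow (Nat.cast_nonneg m) (Nat.cast_nonneg n)

lemma zetaHom_summable {s : ℝ} (hs : 1 < s) : Summable (fun n ↦ ‖zetaHom s hs n‖) := by
  simp only [zetaHom, MonoidWithZeroHom.coe_mk, ZeroHom.coe_mk, Real.norm_eq_abs]
  exact (Real.summable_nat_rpow.mpr (by linarith)).abs

-- r p < 1 etc.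
lemma r_lt {s : ℝ} (hs : 1 < s) (p : Nat.Primes) : (p : ℝ) ^ (-s) ≤ 1/2 := by
  rw [Real.rpow_neg (Nat.cast_nonneg _)]
  rw [inv_le_comm₀ (Real.rpow_pos_of_pos (by exact_mod_cast p.prop.pos) _) (by norm_num)]
  rw [show ((1:ℝ)/2)⁻¹ = 2 by norm_num]
  calc (2:ℝ) = 2 ^ (1:ℝ) := by norm_num
    _ ≤ (2:ℝ) ^ s := Real.rpow_le_rpow_of_exponent_le one_le_two hs.le
    _ ≤ (p:ℝ) ^ s := Real.rpow_le_rpow (by norm_num) (by exact_mod_cast p.prop.two_le) (by linarith)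

lemma r_pos {s : ℝ} (hs : 1 < s) (p : Nat.Primes) : 0 < (p : ℝ) ^ (-s) :=
  Real.rpow_pos_of_pos (by exact_mod_cast p.prop.pos) _

lemma log_zeta_eq {s : ℝ} (hs : 1 < s) :
    Real.log (∑' n : ℕ, zetaHom s hs n) =
      ∑' pk : Nat.Primes × ℕ, ((pk.1 : ℝ) ^ (-s)) ^ (pk.2 + 1) / (pk.2 + 1) := by
  set r : Nat.Primes → ℝ := fun p ↦ (p : ℝ) ^ (-s) with hr
  have hr0 : ∀ p, 0 < r p := r_pos hs
  have hrh : ∀ p, r p ≤ 1/2 := r_lt hs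
  have hr1 : ∀ p, |r p| < 1 := fun p ↦ by
    rw [abs_of_pos (hr0 p)]; linarith [hrh p]
  have hinner : ∀ p, HasSum (fun k : ℕ ↦ (r p) ^ (k + 1) / (k + 1))
      (-Real.log (1 - r p)) := fun p ↦ Real.hasSum_pow_div_log_of_abs_lt_one (hr1 p)
  have hgeo : ∀ p, HasSum (fun k : ℕ ↦ (r p) ^ (k + 1)) (r p * (1 - r p)⁻¹) := by
    intro p
    have := (hasSum_geometric_of_lt_one (hr0 p).le (by linarith [hrh p])).mul_left (r p)
    simpa [pow_succ, mul_comm, ← mul_assoc] using this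
  have hgsum : Summable (fun pk : Nat.Primes × ℕ ↦ (r pk.1) ^ (pk.2 + 1) / (pk.2 + 1)) := by
    refine (summable_prod_of_nonneg ?_).mpr ⟨fun p ↦ (hinner p).summable, ?_⟩
    · intro pk; positivity
    · refine Summable.of_nonneg_of_le (fun p ↦ tsum_nonneg fun k ↦ by positivity)
        (fun p ↦ ?_) (((Nat.Primes.summable_rpow.mpr (by linarith : -s < -1)).mul_left 2))
      calc ∑' k : ℕ, (r p) ^ (k + 1) / (k + 1)
          ≤ ∑' k : ℕ, (r p) ^ (k + 1) := by
            refine Summable.tsum_le_tsum (fun k ↦ ?_) (hinner p).summable (hgeo p).summable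
            exact div_le_self (by positivity) (by exact_mod_cast Nat.le_add_left 1 k)
        _ = r p * (1 - r p)⁻¹ := (hgeo p).tsum_eq
        _ ≤ 2 * (p : ℝ) ^ (-s) := by
            have h2 : (1 - r p)⁻¹ ≤ 2 := by
              rw [inv_le_comm₀ (by linarith [hrh p]) (by norm_num)]
              linarith [hrh p]
            calc r p * (1 - r p)⁻¹ ≤ r p * 2 := by
                  exact mul_le_mul_of_nonneg_left h2 (hr0 p).le
              _ = 2 * (p : ℝ) ^ (-s) := by rw [mul_comm]
  set T := ∑' pk : Nat.Primes × ℕ, (r pk.1) ^ (pk.2 + 1) / (pk.2 + 1) with hT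
  have hPsum : HasSum (fun p ↦ -Real.log (1 - r p)) T :=
    hgsum.hasSum.prod_fiberwise hinner
  have hprod : HasProd (fun p ↦ (1 - r p)⁻¹) (Real.exp T) := by
    have := hPsum.rexp
    refine this.congr_fun fun p ↦ ?_
    simp only [Function.comp_apply, Real.exp_neg, Real.exp_log (by linarith [hrh p] : 0 < 1 - r p)]
  have heuler : ∏' p : Nat.Primes, (1 - zetaHom s hs p)⁻¹ = ∑' n, zetaHom s hs n :=
    EulerProduct.eulerProduct_completely_multiplicative_tprod (zetaHom_summable hs)
  have hz : ∑' n, zetaHom s hs n = Real.exp T := by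
    rw [← heuler, ← hprod.tprod_eq]
    exact tprod_congr fun p ↦ rfl
  rw [hz, Real.log_exp]

lemma tsum_h_eq {s : ℝ} (hs : 1 < s) :
    ∑' n : ℕ, ArithmeticFunction.vonMangoldt n / Real.log n * (n : ℝ) ^ (-s) =
      ∑' pk : Nat.Primes × ℕ, ((pk.1 : ℝ) ^ (-s)) ^ (pk.2 + 1) / (pk.2 + 1) := by
  set h : ℕ → ℝ := fun n ↦ ArithmeticFunction.vonMangoldt n / Real.log n * (n : ℝ) ^ (-s)
    with hh
  have hsupp : Function.support h ⊆ {n | IsPrimePow n} := by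
    intro n hn
    simp only [Function.mem_support, hh, ne_eq] at hn
    by_contra hpp
    exact hn (by simp [ArithmeticFunction.vonMangoldt_eq_zero_iff.mpr hpp])
  have e1 : ∑' x : {n : ℕ // IsPrimePow n}, h x = ∑' n, h n :=
    tsum_subtype_eq_of_support_subset hsupp
  have e2 : ∑' pk : Nat.Primes × ℕ, h (Nat.Primes.prodNatEquiv pk) =
      ∑' x : {n : ℕ // IsPrimePow n}, h x :=
    Nat.Primes.prodNatEquiv.tsum_eq (fun x : {n : ℕ // IsPrimePow n} ↦ h x)
  rw [← e1, ← e2]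
  refine tsum_congr fun ⟨p, k⟩ ↦ ?_
  have hplog : 0 < Real.log p := Real.log_pos (by exact_mod_cast p.prop.one_lt)
  have h1 : ArithmeticFunction.vonMangoldt ((p : ℕ) ^ (k + 1)) = Real.log p := by
    rw [ArithmeticFunction.vonMangoldt_apply_pow k.add_one_ne_zero,
      ArithmeticFunction.vonMangoldt_apply_prime p.prop]
  have h2 : Real.log (((p : ℕ) ^ (k + 1) : ℕ) : ℝ) = (k + 1) * Real.log p := by
    push_cast
    rw [Real.log_pow]
    push_cast; ring
  have h3 : ((((p : ℕ) ^ (k + 1) : ℕ)) : ℝ) ^ (-s) = ((p : ℝ) ^ (-s)) ^ (k + 1) := by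
    push_cast
    rw [← Real.rpow_natCast ((p : ℝ) ^ (-s)) (k + 1), ← Real.rpow_natCast (p : ℝ) (k + 1),
      ← Real.rpow_mul (Nat.cast_nonneg _), ← Real.rpow_mul (Nat.cast_nonneg _), mul_comm]
  simp only [Nat.Primes.coe_prodNatEquiv_apply, hh, h1, h2, h3]
  field_simp

lemma integral_exp_smul {s : ℝ} (hs : 0 < s) (a : ℝ) :
    ∫ u in Set.Ioi a, Real.exp (-s * u) = Real.exp (-s * a) / s := by
  have hderiv : ∀ x ∈ Set.Ici a, HasDerivAt (fun u ↦ -Real.exp (-s * u) / s)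
      (Real.exp (-s * x)) x := by
    intro x _
    have h1 : HasDerivAt (fun u : ℝ ↦ -s * u) (-s) x := by
      simpa using (hasDerivAt_id x).const_mul (-s)
    have h2 := (h1.exp).neg.div_const s
    refine h2.congr_deriv ?_
    field_simp
  have hint : MeasureTheory.IntegrableOn (fun u ↦ Real.exp (-s * u)) (Set.Ioi a) :=
    exp_neg_integrableOn_Ioi a hs
  have htend : Filter.Tendsto (fun u ↦ -Real.exp (-s * u) / s) Filter.atTop (nhds 0) := by
    have : Filter.Tendsto (fun u : ℝ ↦ Real.exp (-s * u)) Filter.atTop (nhds 0) := by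
      simpa using Real.tendsto_exp_comp_nhds_zero.mpr
        (Filter.Tendsto.const_mul_atTop_of_neg (neg_neg_iff_pos.mpr hs) Filter.tendsto_id)
    simpa using (this.neg).div_const s
  have := MeasureTheory.integral_Ioi_of_hasDerivAt_of_tendsto' hderiv hint htend
  rw [this]
  field_simp
  ring


lemma c_nonneg (n : ℕ) : 0 ≤ ArithmeticFunction.vonMangoldt n / Real.log n :=
  div_nonneg ArithmeticFunction.vonMangoldt_nonneg (Real.log_natCast_nonneg n)

lemma c_le_one (n : ℕ) : ArithmeticFunction.vonMangoldt n / Real.log n ≤ 1 := by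
  rcases le_or_gt n 1 with h | h
  · interval_cases n <;> simp [ArithmeticFunction.vonMangoldt_apply_one]
  · rw [div_le_one (Real.log_pos (by exact_mod_cast h))]
    exact ArithmeticFunction.vonMangoldt_le_log

lemma integral_J {s : ℝ} (hs : 1 < s) :
    ∫ u in Set.Ioi (0:ℝ), riemannJ (Real.exp u) * Real.exp (-s * u) =
      (∑' n : ℕ, ArithmeticFunction.vonMangoldt n / Real.log n * (n : ℝ) ^ (-s)) / s := by
  have hs0 : 0 < s := by linarith
  set c : ℕ → ℝ := fun n ↦ ArithmeticFunction.vonMangoldt n / Real.log n with hc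
  set F : ℕ → ℝ → ℝ := fun n u ↦
    (Set.Ici (Real.log n)).indicator (fun v ↦ c n * Real.exp (-s * v)) u with hF
  have hF_int : ∀ n, MeasureTheory.Integrable (F n)
      (MeasureTheory.volume.restrict (Set.Ioi (0:ℝ))) := fun n ↦
    (((exp_neg_integrableOn_Ioi 0 hs0).const_mul (c n)).indicator measurableSet_Ici)
  have hF_val : ∀ n : ℕ, ∫ u in Set.Ioi (0:ℝ), F n u = c n * (n : ℝ) ^ (-s) / s := by
    intro n
    rcases eq_or_ne (c n) 0 with h0 | h0
    · simp [hF, h0]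
    · have hpp : IsPrimePow n := by
        by_contra hpp
        exact h0 (by simp [hc, ArithmeticFunction.vonMangoldt_eq_zero_iff.mpr hpp])
      have hn2 : 2 ≤ n := hpp.two_le
      have hlogpos : 0 < Real.log n := Real.log_pos (by exact_mod_cast hn2)
      rw [hF]
      simp only
      rw [MeasureTheory.setIntegral_indicator measurableSet_Ici]
      have hinter : Set.Ioi (0:ℝ) ∩ Set.Ici (Real.log n) = Set.Ici (Real.log n) :=
        Set.inter_eq_self_of_subset_right (fun x hx ↦ lt_of_lt_of_le hlogpos hx)
      rw [hinter, MeasureTheory.integral_Ici_eq_integral_Ioi,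
        MeasureTheory.integral_const_mul, integral_exp_smul hs0]
      have hnpos : (0:ℝ) < (n:ℝ) := by exact_mod_cast Nat.lt_of_lt_of_le Nat.zero_lt_two hn2
      rw [Real.rpow_def_of_pos hnpos]
      ring_nf
  have hF_norm : ∀ n : ℕ, ∫ u in Set.Ioi (0:ℝ), ‖F n u‖ = c n * (n : ℝ) ^ (-s) / s := by
    intro n
    rw [← hF_val n]
    refine MeasureTheory.integral_congr_ae (Filter.Eventually.of_forall fun u ↦ ?_)
    have : 0 ≤ F n u := by
      refine Set.indicator_nonneg (fun v _ ↦ ?_) u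
      exact mul_nonneg (c_nonneg n) (Real.exp_pos _).le
    exact abs_of_nonneg this
  have hsummable : Summable fun n : ℕ ↦ c n * (n : ℝ) ^ (-s) / s := by
    refine Summable.of_nonneg_of_le
      (fun n ↦ div_nonneg (mul_nonneg (c_nonneg n) (Real.rpow_nonneg (Nat.cast_nonneg n) _)) hs0.le)
      (fun n ↦ ?_) ((Real.summable_nat_rpow.mpr (by linarith : -s < -1)).div_const s)
    have : c n * (n:ℝ) ^ (-s) ≤ 1 * (n:ℝ) ^ (-s) :=
      mul_le_mul_of_nonneg_right (c_le_one n) (Real.rpow_nonneg (Nat.cast_nonneg _) _)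
    rw [one_mul] at this
    gcongr
  have hswap := MeasureTheory.integral_tsum_of_summable_integral_norm hF_int
    (by simpa only [hF_norm] using hsummable)
  have hpt : ∀ u ∈ Set.Ioi (0:ℝ),
      ∑' n : ℕ, F n u = riemannJ (Real.exp u) * Real.exp (-s * u) := by
    intro u hu
    have hu0 : (0:ℝ) < u := hu
    rw [riemannJ, Finset.sum_mul]
    have h1 : ∑' n : ℕ, F n u = ∑ n ∈ Finset.Icc 1 ⌊Real.exp u⌋₊, F n u := by
      refine tsum_eq_sum fun n hn ↦ ?_
      have h := Finset.mem_Icc.not.mp hn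
      rcases Nat.eq_zero_or_pos n with rfl | hn1
      · simp [hF, hc]
      · have hgt : ⌊Real.exp u⌋₊ < n := by
          by_contra hle
          exact h ⟨hn1, le_of_not_gt hle⟩
        have : Real.exp u < n := Nat.lt_of_floor_lt hgt
        have hlt : u < Real.log n := (Real.lt_log_iff_exp_lt (by exact_mod_cast hn1)).mpr this
        exact Set.indicator_of_notMem (by simpa using hlt) _
    rw [h1]
    refine Finset.sum_congr rfl fun n hn ↦ ?_
    rcases Finset.mem_Icc.mp hn with ⟨hn1, hn2⟩
    have hle : (n : ℝ) ≤ Real.exp u :=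
      le_trans (le_trans (Nat.cast_le.mpr hn2) (Nat.floor_le (Real.exp_pos u).le)) le_rfl
    have hlogle : Real.log n ≤ u := by
      rw [Real.log_le_iff_le_exp (by exact_mod_cast hn1)]
      exact hle
    rw [hF]
    simp only
    rw [Set.indicator_of_mem (by simpa using hlogle)]
  calc ∫ u in Set.Ioi (0:ℝ), riemannJ (Real.exp u) * Real.exp (-s * u)
      = ∫ u in Set.Ioi (0:ℝ), ∑' n : ℕ, F n u := by
        exact MeasureTheory.setIntegral_congr_fun measurableSet_Ioi
          (fun u hu ↦ (hpt u hu).symm)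
    _ = ∑' n : ℕ, ∫ u in Set.Ioi (0:ℝ), F n u := hswap.symm
    _ = ∑' n : ℕ, c n * (n : ℝ) ^ (-s) / s := by simp only [hF_val]
    _ = (∑' n : ℕ, c n * (n : ℝ) ^ (-s)) / s := tsum_div_const

theorem stmt_15 (s : ℝ) (hs : 1 < s) :
    (1 / s) * Real.log (∑' n : ℕ, ((n + 1 : ℕ) : ℝ) ^ (-s)) =
      ∫ u in Set.Ioi (0 : ℝ), riemannJ (Real.exp u) * Real.exp (-s * u) := by
  have hzeta : ∑' n : ℕ, ((n + 1 : ℕ) : ℝ) ^ (-s) = ∑' n : ℕ, zetaHom s hs n := by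
    have hsum : Summable (fun n ↦ zetaHom s hs n) := (zetaHom_summable hs).of_norm
    rw [Summable.tsum_eq_zero_add hsum, map_zero, zero_add]
    exact tsum_congr fun n ↦ rfl
  rw [hzeta, log_zeta_eq hs, ← tsum_h_eq hs, integral_J hs, one_div, inv_mul_eq_div]
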